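/- arXiv:1704.03982 — 5 statements merged into one kernel-verified Lean document; each statement's English description precedes it below -/
import Mathlib

section
/- For all n ≥ 1, the polynomial C_{n,121}(q) is identically zero. -/
open Polynomial

/-- The six coefficient polynomials `(C_{n,0}, C_{n,1}, C_{n,2}, C_{n,12}, C_{n,21}, C_{n,121})`. -/
structure CVec where
  c0 : Polynomial ℤ
  c1 : Polynomial ℤ
  c2 : Polynomial ℤ
  c12 : Polynomial ℤ
  c21 : Polynomial ℤ
  c121 : Polynomial ℤ

/-- One step of the recursion of Theorem 3.3. -/
noncomputable def Cstep (p : CVec) : CVec where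
  c0 := X ^ 2 * p.c21 - X * (X - 1) * p.c1
  c1 := -(X - 1) ^ 2 * p.c1 - (X - 1) * p.c0 + X ^ 2 * p.c121
  c2 := X * p.c1
  c12 := (X - 1) * p.c1 + p.c0
  c21 := -(X - 1) * p.c2 + X * p.c12 - (X - 1) ^ 2 * p.c21 + X * (X - 1) * p.c121
  c121 := p.c2 + (X - 1) * p.c21

/-- `Cw n` is the vector of polynomials `C_{n,*}`; the value at `n = 0` is junk. -/
noncomputable def Cw : ℕ → CVec
  | 0 => ⟨0, 0, 0, 0, 0, 0⟩
  | 1 => ⟨0, -(X - 1), 0, 1, 0, 0⟩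
  | (n + 2) => Cstep (Cw (n + 1))

lemma Cw_inv : ∀ n : ℕ, (Cw (n+1)).c121 = 0 ∧
    (Cw (n+1)).c2 + (X - 1) * (Cw (n+1)).c21 = 0 ∧
    (Cw (n+1)).c1 + (X - 1) * (Cw (n+1)).c12 = 0 := by
  intro n
  induction n with
  | zero => simp [Cw]
  | succ m ih =>
    obtain ⟨hA, hB, hC⟩ := ih
    have h2 : (Cw (m+1)).c2 = -(X - 1) * (Cw (m+1)).c21 := by linear_combination hB
    have h1 : (Cw (m+1)).c1 = -(X - 1) * (Cw (m+1)).c12 := by linear_combination hC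
    have hCw : Cw (m+2) = Cstep (Cw (m+1)) := rfl
    refine ⟨?_, ?_, ?_⟩ <;> simp only [hCw, Cstep, h2, h1, hA] <;> ring

theorem C121_eq_zero : ∀ n : ℕ, 1 ≤ n → (Cw n).c121 = 0 := by
  rintro (_|n) h
  · omega
  · exact (Cw_inv n).1
end

section
/- For all n ≥ 1, deg C_{n,2} ≤ 2n-2, deg C_{n,12} ≤ 2n-2, and deg C_{n,21} ≤ 2n-3 (interpreting the degree of the zero polynomial as -∞ or 0 as appropriate). -/
open Polynomial

lemma natDegree_X_sub_one_le : ((X : Polynomial ℤ) - 1).natDegree ≤ 1 :=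
  (natDegree_sub_le _ _).trans (by simp)

lemma natDegree_X_sub_one_sq_le : (((X : Polynomial ℤ) - 1) ^ 2).natDegree ≤ 2 :=
  (natDegree_pow_le).trans (by
    have := natDegree_X_sub_one_le; omega)

lemma mul_deg_le {p q : Polynomial ℤ} {a b c : ℕ} (hp : p.natDegree ≤ a)
    (hq : q.natDegree ≤ b) (h : a + b ≤ c) : (p * q).natDegree ≤ c :=
  (natDegree_mul_le).trans (by omega)

lemma C_all_bounds : ∀ n : ℕ, 2 ≤ n →
    (Cw n).c0.natDegree ≤ 2 * n - 1 ∧ (Cw n).c1.natDegree ≤ 2 * n - 1 ∧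
    (Cw n).c2.natDegree ≤ 2 * n - 2 ∧ (Cw n).c12.natDegree ≤ 2 * n - 2 ∧
    (Cw n).c21.natDegree ≤ 2 * n - 3 ∧ (Cw n).c121.natDegree ≤ 2 * n - 3 := by
  have hX : (X : Polynomial ℤ).natDegree ≤ 1 := natDegree_X_le
  have hX2 : ((X : Polynomial ℤ) ^ 2).natDegree ≤ 2 :=
    natDegree_pow_le.trans (by simp)
  have hX1 := natDegree_X_sub_one_le
  have hX1sq := natDegree_X_sub_one_sq_le
  have hXX1 : ((X : Polynomial ℤ) * (X - 1)).natDegree ≤ 2 :=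
    mul_deg_le hX hX1 le_rfl
  intro n hn
  induction n, hn using Nat.le_induction with
  | base =>
    have h2 : Cw 2 = Cstep (Cw 1) := rfl
    rw [h2]
    simp only [Cw, Cstep]
    refine ⟨?_, ?_, ?_, ?_, ?_, ?_⟩ <;> norm_num <;> compute_degree
  | succ k hk ih =>
    obtain ⟨h0, h1', h2, h12, h21, h121⟩ := ih
    obtain ⟨j, rfl⟩ : ∃ j, k = j + 1 := ⟨k - 1, by omega⟩
    have hstep : Cw (j + 1 + 1) = Cstep (Cw (j + 1)) := rfl
    rw [hstep]
    set p := Cw (j + 1)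
    refine ⟨?_, ?_, ?_, ?_, ?_, ?_⟩
    · -- c0
      exact (natDegree_sub_le _ _).trans (max_le
        (mul_deg_le hX2 h21 (by omega))
        (mul_deg_le hXX1 h1' (by omega)))
    · -- c1
      refine (natDegree_add_le _ _).trans (max_le ((natDegree_sub_le _ _).trans
        (max_le ?_ ?_)) ?_)
      · rw [neg_mul, natDegree_neg]
        exact mul_deg_le hX1sq h1' (by omega)
      · exact mul_deg_le hX1 h0 (by omega)
      · exact mul_deg_le hX2 h121 (by omega)
    · -- c2
      exact mul_deg_le hX h1' (by omega)
    · -- c12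
      exact (natDegree_add_le _ _).trans (max_le
        (mul_deg_le hX1 h1' (by omega)) (by omega))
    · -- c21
      refine (natDegree_add_le _ _).trans (max_le ((natDegree_sub_le _ _).trans
        (max_le ((natDegree_add_le _ _).trans (max_le ?_ ?_)) ?_)) ?_)
      · rw [neg_mul, natDegree_neg]
        exact mul_deg_le hX1 h2 (by omega)
      · exact mul_deg_le hX h12 (by omega)
      · exact mul_deg_le hX1sq h21 (by omega)
      · exact mul_deg_le hXX1 h121 (by omega)
    · -- c121
      exact (natDegree_add_le _ _).trans (max_le (by omega)
        (mul_deg_le hX1 h21 (by omega)))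

theorem C_natDegree_sharp : ∀ n : ℕ, 1 ≤ n →
    (Cw n).c2.natDegree ≤ 2 * n - 2 ∧ (Cw n).c12.natDegree ≤ 2 * n - 2 ∧
    (Cw n).c21.natDegree ≤ 2 * n - 3 := by
  intro n hn
  rcases Nat.eq_or_lt_of_le hn with h1 | h1
  · rw [← h1]
    refine ⟨?_, ?_, ?_⟩ <;> simp [Cw]
  · obtain ⟨_, _, h2, h12, h21, _⟩ := C_all_bounds n h1
    exact ⟨h2, h12, h21⟩
end

section
/- For all n ≥ 2, the coefficient of q^1 in C_{n,0}(q) equals (-1)^{n-2} (equivalently (-1)^n). -/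
open Polynomial

lemma cXmul0 (p : Polynomial ℤ) : ((X : Polynomial ℤ) * p).coeff 0 = 0 := by
  simp [mul_coeff_zero]

lemma cXmul1 (p : Polynomial ℤ) : ((X : Polynomial ℤ) * p).coeff 1 = p.coeff 0 := by
  simpa using coeff_X_mul p 0

lemma cX2mul0 (p : Polynomial ℤ) : ((X : Polynomial ℤ) ^ 2 * p).coeff 0 = 0 := by
  have : ((X : Polynomial ℤ) ^ 2 * p) = X * (X * p) := by ring
  rw [this, cXmul0]

lemma cX2mul1 (p : Polynomial ℤ) : ((X : Polynomial ℤ) ^ 2 * p).coeff 1 = 0 := by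
  have : ((X : Polynomial ℤ) ^ 2 * p) = X * (X * p) := by ring
  rw [this, cXmul1, cXmul0]

lemma cXm1mul0 (p : Polynomial ℤ) : (((X : Polynomial ℤ) - 1) * p).coeff 0 = -p.coeff 0 := by
  have : (((X : Polynomial ℤ) - 1) * p) = X * p - p := by ring
  simp [this, cXmul0]

lemma cXm1mul1 (p : Polynomial ℤ) :
    (((X : Polynomial ℤ) - 1) * p).coeff 1 = p.coeff 0 - p.coeff 1 := by
  have : (((X : Polynomial ℤ) - 1) * p) = X * p - p := by ring
  simp [this, cXmul1]

lemma cXm1sq0 (p : Polynomial ℤ) : (((X : Polynomial ℤ) - 1) ^ 2 * p).coeff 0 = p.coeff 0 := by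
  have : (((X : Polynomial ℤ) - 1) ^ 2 * p) = (X - 1) * ((X - 1) * p) := by ring
  rw [this, cXm1mul0, cXm1mul0]; ring

lemma cXm1sq1 (p : Polynomial ℤ) :
    (((X : Polynomial ℤ) - 1) ^ 2 * p).coeff 1 = p.coeff 1 - 2 * p.coeff 0 := by
  have : (((X : Polynomial ℤ) - 1) ^ 2 * p) = (X - 1) * ((X - 1) * p) := by ring
  rw [this, cXm1mul1, cXm1mul0, cXm1mul1]; ring

lemma cXXm1mul0 (p : Polynomial ℤ) :
    ((X : Polynomial ℤ) * (X - 1) * p).coeff 0 = 0 := by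
  have : ((X : Polynomial ℤ) * (X - 1) * p) = X * ((X - 1) * p) := by ring
  rw [this, cXmul0]

lemma cXXm1mul1 (p : Polynomial ℤ) :
    ((X : Polynomial ℤ) * (X - 1) * p).coeff 1 = -p.coeff 0 := by
  have : ((X : Polynomial ℤ) * (X - 1) * p) = X * ((X - 1) * p) := by ring
  rw [this, cXmul1, cXm1mul0]

/-- Joint low-order coefficient invariant. -/
lemma Cw_inv_s5 : ∀ n : ℕ, 2 ≤ n →
    (Cw n).c0.coeff 0 = 0 ∧ (Cw n).c0.coeff 1 = (-1) ^ n ∧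
    (Cw n).c1.coeff 0 = -(-1) ^ n ∧ (Cw n).c1.coeff 1 = (-1) ^ n * (n + 1) ∧
    (Cw n).c2.coeff 0 = 0 ∧ (Cw n).c2.coeff 1 = (-1) ^ n ∧
    (Cw n).c12.coeff 0 = -(-1) ^ n ∧ (Cw n).c12.coeff 1 = (-1) ^ n * n ∧
    (Cw n).c21.coeff 0 = 0 ∧ (Cw n).c21.coeff 1 = (-1) ^ n ∧
    (Cw n).c121.coeff 0 = 0 ∧ (Cw n).c121.coeff 1 = 0 := by
  intro n hn
  induction n, hn using Nat.le_induction with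
  | base =>
    show _ ∧ _
    simp only [Cw, Cstep]
    simp only [coeff_sub, coeff_add, coeff_neg, neg_mul,
      cXmul0, cXmul1, cXm1mul0, cXm1mul1, cX2mul0, cX2mul1, cXm1sq0, cXm1sq1,
      cXXm1mul0, cXXm1mul1]
    norm_num [coeff_one, coeff_X_zero, coeff_X_one]
  | succ n hn ih =>
    obtain ⟨h00, h01, h10, h11, h20, h21, h120, h121, h210, h211, h1210, h1211⟩ := ih
    have hC : Cw (n + 1) = Cstep (Cw n) := by
      obtain ⟨m, rfl⟩ : ∃ m, n = m + 2 := ⟨n - 2, by omega⟩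
      rfl
    rw [hC]
    simp only [Cstep, coeff_sub, coeff_add, coeff_neg, neg_mul,
      cXmul0, cXmul1, cXm1mul0, cXm1mul1, cX2mul0, cX2mul1, cXm1sq0, cXm1sq1,
      cXXm1mul0, cXXm1mul1, h00, h01, h10, h11, h20, h21, h120, h121, h210, h211,
      h1210, h1211]
    push_cast
    refine ⟨trivial, by ring, by ring, by ring, trivial, by ring, by ring, by ring,
      trivial, by ring, trivial, by ring⟩

theorem C0_coeff_one : ∀ n : ℕ, 2 ≤ n → (Cw n).c0.coeff 1 = (-1) ^ (n - 2) := by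
  intro n hn
  have h := (Cw_inv_s5 n hn).2.1
  rw [h]
  obtain ⟨m, rfl⟩ : ∃ m, n = m + 2 := ⟨n - 2, by omega⟩
  simp [pow_add]
end

section
/- For all n ≥ 1, the Laurent polynomial V_n(t) (the Jones polynomial of W(3,n)) has all exponents in the range [-n, n]; that is, every monomial t^k appearing with nonzero coefficient satisfies -n ≤ k ≤ n. -/
open Polynomial

open LaurentPolynomial in
/-- The Jones polynomial `V_{W(3,n)}(t)` of the weaving knot `W(3,n)`, as a Laurent
polynomial in `t` (here `T k` denotes `t^k`). -/
noncomputable def V (n : ℕ) : LaurentPolynomial ℤ :=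
  T (-(n : ℤ) - 1) *
    ((1 + T 1) ^ 2 * toLaurent (Cw n).c0 +
      (1 + T 1) * T 2 * toLaurent ((Cw n).c1 + (Cw n).c2) +
      T 4 * toLaurent ((Cw n).c12 + (Cw n).c21))


open LaurentPolynomial in
lemma T_mul_toLaurent_apply (m k : ℤ) (p : Polynomial ℤ) :
    (T m * toLaurent p : LaurentPolynomial ℤ).coeff k =
      if 0 ≤ k - m then p.coeff (k - m).toNat else 0 := by
  have h : (T m * toLaurent p : LaurentPolynomial ℤ).coeff k = (toLaurent p).coeff (-m + k) :=
    (AddMonoidAlgebra.coeff_single_mul_apply (toLaurent p) 1 m k).trans (one_mul _)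
  rw [h, LaurentPolynomial.coeff_toLaurent]
  rw [show (-m + k) = k - m by ring]
  split_ifs with hk
  · set j := (k - m).toNat with hjdef
    rw [show (k - m) = Nat.castEmbedding j by simp; omega,
      Finsupp.mapDomain_apply Nat.castEmbedding.injective]
    rfl
  · rw [Finsupp.mapDomain_notin_range]
    rintro ⟨j, hj⟩
    simp at hj
    omega

/-- The invariant satisfied by `Cw (n+1)`. -/
def CInv (p : CVec) (n : ℕ) : Prop :=
  p.c121 = 0 ∧ p.c1 = -(X - 1) * p.c12 ∧ p.c2 = -(X - 1) * p.c21 ∧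
    X ∣ p.c0 ∧ p.c0.natDegree ≤ 2 * n + 1 ∧ p.c12.natDegree ≤ 2 * n ∧
    p.c21.natDegree ≤ 2 * n

lemma cInv (n : ℕ) : CInv (Cw (n + 1)) n := by
  induction n with
  | zero =>
    refine ⟨rfl, by show -(X-1) = -(X-1) * 1; ring, by show (0:Polynomial ℤ) = -(X-1)*0; ring,
      ⟨0, by show (0:Polynomial ℤ) = X * 0; ring⟩, ?_, ?_, ?_⟩ <;> simp [Cw]
  | succ n ih =>
    obtain ⟨h121, h1, h2, ⟨u, hu⟩, hd0, hd12, hd21⟩ := ih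
    set p := Cw (n + 1) with hp
    have hstep : Cw (n + 2) = Cstep p := rfl
    have e12 : (Cstep p).c12 = p.c0 - (X - 1) ^ 2 * p.c12 := by
      show (X - 1) * p.c1 + p.c0 = _; rw [h1]; ring
    have e21 : (Cstep p).c21 = X * p.c12 := by
      show -(X - 1) * p.c2 + X * p.c12 - (X - 1) ^ 2 * p.c21 + X * (X - 1) * p.c121 = _
      rw [h2, h121]; ring
    have e0 : (Cstep p).c0 = X ^ 2 * p.c21 + X * (X - 1) ^ 2 * p.c12 := by
      show X ^ 2 * p.c21 - X * (X - 1) * p.c1 = _; rw [h1]; ring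
    refine ⟨?_, ?_, ?_, ?_, ?_, ?_, ?_⟩
    · show p.c2 + (X - 1) * p.c21 = 0
      rw [h2]; ring
    · show -(X - 1) ^ 2 * p.c1 - (X - 1) * p.c0 + X ^ 2 * p.c121 = -(X-1) * (Cstep p).c12
      rw [e12, h1, h121]; ring
    · show X * p.c1 = -(X - 1) * (Cstep p).c21
      rw [e21, h1]; ring
    · exact ⟨X * p.c21 - (X - 1) * p.c1, by
        show X ^ 2 * p.c21 - X * (X - 1) * p.c1 = _; ring⟩
    · rw [hstep, e0]
      refine le_trans (natDegree_add_le _ _) (max_le ?_ ?_)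
      · refine le_trans (natDegree_mul_le) ?_
        simp only [natDegree_X_pow]
        omega
      · refine le_trans (natDegree_mul_le) ?_
        have h3 : (X * (X - 1) ^ 2 : Polynomial ℤ).natDegree ≤ 3 := by
          compute_degree
        omega
    · rw [hstep, e12]
      refine le_trans (natDegree_sub_le _ _) (max_le ?_ ?_)
      · omega
      · refine le_trans (natDegree_mul_le) ?_
        have h3 : ((X - 1) ^ 2 : Polynomial ℤ).natDegree ≤ 2 := by compute_degree
        omega
    · rw [hstep, e21]
      refine le_trans (natDegree_mul_le) ?_
      simp only [natDegree_X]
      omega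

open LaurentPolynomial in
lemma V_eq (n : ℕ) : V n = T (-(n : ℤ) - 1) *
    toLaurent ((1 + X) ^ 2 * (Cw n).c0 + (1 + X) * X ^ 2 * ((Cw n).c1 + (Cw n).c2)
      + X ^ 4 * ((Cw n).c12 + (Cw n).c21)) := by
  simp only [V, map_add, map_mul, map_pow, Polynomial.toLaurent_X, map_one,
    ← Polynomial.toLaurent_X_pow]
  norm_num [LaurentPolynomial.T_pow]

theorem V_support : ∀ n : ℕ, 1 ≤ n → ∀ k : ℤ, (V n).coeff k ≠ 0 → -(n : ℤ) ≤ k ∧ k ≤ (n : ℤ) := by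
  intro n hn k hk
  obtain ⟨m, rfl⟩ : ∃ m, n = m + 1 := ⟨n - 1, by omega⟩
  obtain ⟨h121, h1, h2, hX0, hd0, hd12, hd21⟩ := cInv m
  set p := Cw (m + 1) with hp
  -- the bracket polynomial
  set B : Polynomial ℤ := (1 + X) ^ 2 * p.c0 + (1 + X) * X ^ 2 * (p.c1 + p.c2)
      + X ^ 4 * (p.c12 + p.c21) with hB
  have hBsimp : B = (1 + X) ^ 2 * p.c0 + X ^ 2 * (p.c12 + p.c21) := by
    rw [hB, h1, h2]; ring
  have hXB : X ∣ B := by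
    rw [hBsimp]
    exact dvd_add (Dvd.dvd.mul_left hX0 _) ⟨X * (p.c12 + p.c21), by ring⟩
  have hB0 : B.coeff 0 = 0 := Polynomial.X_dvd_iff.mp hXB
  have hdB : B.natDegree ≤ 2 * m + 3 := by
    rw [hBsimp]
    refine le_trans (natDegree_add_le _ _) (max_le ?_ ?_)
    · refine le_trans (natDegree_mul_le) ?_
      have h2' : ((1 + X) ^ 2 : Polynomial ℤ).natDegree ≤ 2 := by compute_degree
      omega
    · refine le_trans (natDegree_mul_le) ?_
      have h12 : (p.c12 + p.c21).natDegree ≤ 2 * m := by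
        exact le_trans (natDegree_add_le _ _) (by omega)
      simp only [natDegree_X_pow]
      omega
  have hv := V_eq (m + 1)
  rw [← hB] at hv
  rw [hv, T_mul_toLaurent_apply] at hk
  have hpos : 0 ≤ k - (-((m : ℤ) + 1) - 1) := by
    by_contra hneg
    rw [if_neg (by push_cast at hneg ⊢; omega)] at hk
    exact hk rfl
  rw [if_pos (by push_cast at hpos ⊢; omega)] at hk
  set j := (k - (-((m + 1 : ℕ) : ℤ) - 1)).toNat with hj
  have hj1 : j ≠ 0 := by
    intro h0
    rw [h0, hB0] at hk
    exact hk rfl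
  have hj2 : j ≤ B.natDegree := le_natDegree_of_ne_zero hk
  have hjk : (j : ℤ) = k + (m : ℤ) + 2 := by
    rw [hj]; push_cast; omega
  push_cast
  omega
end

section
/- For all n ≥ 2, the coefficient of t^{-n} in V_n(t) equals (-1)^{n-2}; in particular the lowest-degree term of the Jones polynomial of W(3,n) is ±t^{-n}. -/
open Polynomial

lemma mul_coeff_one' (p q : Polynomial ℤ) :
    (p * q).coeff 1 = p.coeff 0 * q.coeff 1 + p.coeff 1 * q.coeff 0 := by
  rw [coeff_mul]
  simp [Finset.Nat.sum_antidiagonal_eq_sum_range_succ_mk, Finset.sum_range_succ]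

lemma key : ∀ n : ℕ, 2 ≤ n →
    (Cw n).c0.coeff 0 = 0 ∧ (Cw n).c0.coeff 1 = (-1) ^ n ∧
    (Cw n).c1.coeff 0 = -(-1) ^ n ∧
    (Cw n).c2.coeff 0 = 0 ∧ (Cw n).c2.coeff 1 = (-1) ^ n ∧
    (Cw n).c12.coeff 0 = -(-1) ^ n ∧
    (Cw n).c21.coeff 0 = 0 ∧ (Cw n).c21.coeff 1 = (-1) ^ n ∧
    (Cw n).c121.coeff 0 = 0 ∧ (Cw n).c121.coeff 1 = 0 := by
  intro n hn
  induction n, hn using Nat.le_induction with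
  | base =>
    show _ ∧ _
    norm_num [Cw, Cstep, pow_two, mul_coeff_one', mul_coeff_zero, coeff_sub, coeff_add,
      coeff_neg, coeff_one, coeff_X_zero, coeff_X_one]
  | succ n hn ih =>
    obtain ⟨m, rfl⟩ : ∃ m, n = m + 1 := ⟨n - 1, by omega⟩
    obtain ⟨h1, h2, h3, h4, h5, h6, h7, h8, h9, h10⟩ := ih
    have hC : Cw (m + 1 + 1) = Cstep (Cw (m + 1)) := rfl
    rw [hC]
    simp only [Cstep, pow_two, mul_coeff_one', mul_coeff_zero, coeff_sub, coeff_add,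
      coeff_neg, coeff_one, coeff_X_zero, coeff_X_one, h1, h2, h3, h4, h5, h6, h7, h8, h9, h10,
      pow_succ]
    norm_num

open LaurentPolynomial

lemma toLaurent_apply_coe (p : Polynomial ℤ) (k : ℕ) :
    (toLaurent p).coeff (k : ℤ) = p.coeff k := by
  rw [LaurentPolynomial.coeff_toLaurent]
  exact Finsupp.mapDomain_apply Nat.castEmbedding.injective p.toFinsupp.coeff k

lemma toLaurent_apply_neg (p : Polynomial ℤ) (k : ℤ) (hk : k < 0) :
    (toLaurent p).coeff k = 0 := by
  rw [LaurentPolynomial.coeff_toLaurent]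
  apply Finsupp.mapDomain_notin_range
  rintro ⟨m, hm⟩
  have : (m : ℤ) = k := hm
  omega

lemma LP_add_apply (f g : LaurentPolynomial ℤ) (y : ℤ) : (f + g).coeff y = f.coeff y + g.coeff y := by
  rw [AddMonoidAlgebra.coeff_add]; rfl

lemma T_mul_apply (a : ℤ) (f : LaurentPolynomial ℤ) (y : ℤ) :
    (T a * f : LaurentPolynomial ℤ).coeff y = f.coeff (y - a) := by
  have h := AddMonoidAlgebra.coeff_single_mul_apply f (1 : ℤ) a y
  rw [one_mul, neg_add_eq_sub] at h
  exact h

theorem V_lowest_coeff : ∀ n : ℕ, 2 ≤ n → (V n).coeff (-(n : ℤ)) = (-1) ^ (n - 2) := by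
  intro n hn
  obtain ⟨h1, h2, _⟩ := key n hn
  have hexp : (1 + T 1 : LaurentPolynomial ℤ) ^ 2 * toLaurent (Cw n).c0 +
      (1 + T 1) * T 2 * toLaurent ((Cw n).c1 + (Cw n).c2) +
      T 4 * toLaurent ((Cw n).c12 + (Cw n).c21)
      = toLaurent (Cw n).c0 + T 1 * toLaurent ((Cw n).c0 + (Cw n).c0)
        + T 2 * toLaurent ((Cw n).c0 + ((Cw n).c1 + (Cw n).c2))
        + T 3 * toLaurent ((Cw n).c1 + (Cw n).c2)
        + T 4 * toLaurent ((Cw n).c12 + (Cw n).c21) := by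
    simp only [map_add]
    have e2 : (T 2 : LaurentPolynomial ℤ) = T 1 * T 1 := by rw [← T_add]; norm_num
    have e3 : (T 3 : LaurentPolynomial ℤ) = T 1 * T 2 := by rw [← T_add]; norm_num
    rw [e3, e2]; ring
  rw [V, hexp, T_mul_apply]
  have hy : -(n : ℤ) - (-(n : ℤ) - 1) = 1 := by ring
  rw [hy]
  simp only [LP_add_apply, T_mul_apply]
  norm_num [-LaurentPolynomial.coeff_toLaurent]
  have hz : ∀ p : Polynomial ℤ, (toLaurent p).coeff (0 : ℤ) = p.coeff 0 := fun p =>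
    toLaurent_apply_coe p 0
  simp only [LP_add_apply, hz,
    toLaurent_apply_neg _ (-(1 : ℤ) : ℤ) (by norm_num),
    toLaurent_apply_neg _ (-2 : ℤ) (by norm_num),
    toLaurent_apply_neg _ (-3 : ℤ) (by norm_num), h1, h2]
  norm_num [-LaurentPolynomial.coeff_toLaurent]
  obtain ⟨m, rfl⟩ : ∃ m, n = m + 2 := ⟨n - 2, by omega⟩
  rw [show (1 : ℤ) = ((1 : ℕ) : ℤ) by norm_num, toLaurent_apply_coe, h2, pow_add]
  norm_num
end
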